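/- Let (A, +, ·, 0, 1) be a unitary ring with a distinguished element ½ ∈ A, and define the ternary operation p(a,b,c) = a + b·c − b·a. Then (A, p, 0, ½, 1) is a mobi algebra if and only if ½ is the (two-sided) multiplicative inverse of 1+1, i.e., (1+1)·½ = 1 = ½·(1+1). -/
import Mathlib


/-- A mobi algebra: a set with a ternary operation `p` and constants `e0`, `half`, `e1`. -/
structure MobiAlgebra (A : Type*) where
  p : A → A → A → A
  e0 : A
  half : A
  e1 : A
  A1 : p e1 half e0 = half
  A2 : ∀ a, p e0 a e1 = a
  A3 : ∀ a b, p a b a = a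
  A4 : ∀ a b, p a e0 b = a
  A5 : ∀ a b, p a e1 b = b
  A6 : ∀ a a' b, p a half b = p a' half b → a = a'
  A7 : ∀ a b c1 c2 c3, p a (p c1 c2 c3) b = p (p a c1 b) c2 (p a c3 b)
  A8 : ∀ a1 a2 b1 b2 c,
    p (p a1 c b1) half (p a2 c b2) = p (p a1 half a2) c (p b1 half b2)

/-- Theorem 7.2: given a unitary ring (A,+,·,0,1) and an element ½ ∈ A,
the structure (A,p,0,½,1) with p(a,b,c) = a + b·c - b·a is a mobi algebra
iff ½ is the two-sided inverse of 1+1. -/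
theorem ring_half_mobi_iff {A : Type*} [Ring A] (half : A) :
    (∃ M : MobiAlgebra A,
      M.p = (fun a b c => a + b * c - b * a) ∧
      M.e0 = 0 ∧ M.half = half ∧ M.e1 = 1) ↔
    ((1 + 1) * half = 1 ∧ half * (1 + 1) = 1) := by
  constructor
  · rintro ⟨M, hp, h0, hh, h1⟩
    have hA1 := M.A1
    rw [hp, h0, hh, h1] at hA1
    simp only [mul_zero, mul_one, add_zero] at hA1
    -- hA1 : 1 - half = half
    have h2 : (1 : A) = half + half := eq_add_of_sub_eq hA1
    constructor
    · rw [add_mul, one_mul, ← h2]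
    · rw [mul_add, mul_one, ← h2]
  · rintro ⟨hl, hr⟩
    have key : ∀ x : A, x = half * x + half * x := by
      intro x
      calc x = ((1 + 1) * half) * x := by rw [hl, one_mul]
        _ = half * x + half * x := by noncomm_ring
    have hc : ∀ x : A, half * x = x * half := by
      intro x
      calc half * x = half * x * ((1 + 1) * half) := by rw [hl, mul_one]
        _ = (half * (1 + 1)) * x * half := by noncomm_ring
        _ = x * half := by rw [hr, one_mul]
    refine ⟨⟨fun a b c => a + b * c - b * a, 0, half, 1, ?_, ?_, ?_, ?_, ?_, ?_, ?_, ?_⟩,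
      rfl, rfl, rfl, rfl⟩
    · -- A1
      show 1 + half * 0 - half * 1 = half
      have h2 : (1 : A) = half + half := by simpa using key 1
      rw [mul_zero, mul_one, add_zero, h2]; abel
    · intro a; noncomm_ring
    · intro a b; noncomm_ring
    · intro a b; noncomm_ring
    · intro a b; noncomm_ring
    · -- A6
      intro a a' b h
      have h' : a + half * b - half * a = a' + half * b - half * a' := h
      have h2 : half * a = half * a' := by
        have h3 : half * a + half * b = half * a' + half * b := by
          calc half * a + half * b
              = (half * a + half * a) + half * b - half * a := by abel
            _ = a + half * b - half * a := by rw [← key a]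
            _ = a' + half * b - half * a' := h'
            _ = (half * a' + half * a') + half * b - half * a' := by rw [← key a']
            _ = half * a' + half * b := by abel
        exact add_right_cancel h3
      calc a = half * a + half * a := key a
        _ = half * a' + half * a' := by rw [h2]
        _ = a' := (key a').symm
    · intro a b c1 c2 c3; noncomm_ring
    · -- A8
      intro a1 a2 b1 b2 c
      have hcm : ∀ x : A, half * (c * x) = c * (half * x) := by
        intro x; rw [← mul_assoc, hc c, mul_assoc]
      simp only [mul_sub, mul_add, sub_mul, add_mul, mul_assoc, hcm]
      abel
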